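/- arXiv:2301.03576 — 2 statements merged into one kernel-verified Lean document; each statement's English description precedes it below -/
import Mathlib

section
/- Let μ ≥ 0 and s > 0 with μ·s < 1, and let (t_k)_{k≥0} be a strictly increasing sequence of positive reals. Define α_k = (2√s/t_{k+1})·cothc((√μ/2)·t_{k+1}) and γ_k = (4/t_k²)·cothc²((√μ/2)·t_k). Suppose the adaptive timestep rule holds with equality: (1 − α_k)·(t_{k+1}²/4)·sinhc²((√μ/2)·t_{k+1}) = (t_k²/4)·sinhc²((√μ/2)·t_k) for all k ≥ 0. Then: (i) γ₀ > μ; (ii) (1/s)·α_k² = (1 − α_k)·γ_k + μ·α_k for all k ≥ 0; (iii) γ_{k+1} = (1 − α_k)·γ_k + μ·α_k for all k ≥ 0; (iv) α_k·γ_k/(γ_k + μ·α_k) = (α_k − μ·s)/(1 − μ·s) for all k ≥ 0; and (v) α_k/γ_{k+1} = s/α_k = (√s·t_{k+1}/2)·tanhc((√μ/2)·t_{k+1}) for all k ≥ 0. (Consequently the original Nesterov accelerated gradient iteration with these α_k, γ_k coincides with the unified NAG family with parameters τ_k = (α_k − μ·s)/(1 − μ·s) and δ_k = (√s·t_{k+1}/2)·tanhc((√μ/2)·t_{k+1}).)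 -/
noncomputable def sinhc (x : ℝ) : ℝ := if x = 0 then 1 else Real.sinh x / x
noncomputable def cschc (x : ℝ) : ℝ := 1 / sinhc x
noncomputable def tanhc (x : ℝ) : ℝ := sinhc x / Real.cosh x
noncomputable def cothc (x : ℝ) : ℝ := 1 / tanhc x

lemma sinhc_pos {x : ℝ} (hx : 0 ≤ x) : 0 < sinhc x := by
  unfold sinhc
  rcases eq_or_lt_of_le hx with h | h
  · simp [← h]
  · rw [if_neg h.ne']
    exact div_pos (Real.sinh_pos_iff.mpr h) h

lemma cothc_eq (x : ℝ) : cothc x = Real.cosh x / sinhc x := by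
  unfold cothc tanhc
  rw [one_div_div]

lemma sinh_eq_mul (x : ℝ) : Real.sinh x = x * sinhc x := by
  unfold sinhc
  split_ifs with h
  · simp [h]
  · field_simp

set_option maxHeartbeats 1000000 in
/-- The adaptive timestep scheme recovers the original NAG: with
`α_k = (2√s/t_{k+1})·cothc((√μ/2)t_{k+1})` and `γ_k = (4/t_k²)·cothc²((√μ/2)t_k)`,
if the adaptive rule holds with equality, then `γ₀ > μ`, the sequences satisfy the
original NAG recursions, and the original NAG parameters coincide with those of the
unified NAG family. -/
theorem adaptive_timestep_recovers_original_nag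
    (μ s : ℝ) (hμ : 0 ≤ μ) (hs : 0 < s) (hμs : μ * s < 1)
    (t : ℕ → ℝ) (ht : StrictMono t) (htpos : ∀ k, 0 < t k)
    (α γ : ℕ → ℝ)
    (hα : ∀ k, α k = 2 * Real.sqrt s / t (k + 1) * cothc (Real.sqrt μ / 2 * t (k + 1)))
    (hγ : ∀ k, γ k = 4 / t k ^ 2 * cothc (Real.sqrt μ / 2 * t k) ^ 2)
    (hadapt : ∀ k, (1 - α k) * (t (k + 1) ^ 2 / 4 * sinhc (Real.sqrt μ / 2 * t (k + 1)) ^ 2)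
      = t k ^ 2 / 4 * sinhc (Real.sqrt μ / 2 * t k) ^ 2) :
    μ < γ 0 ∧
    (∀ k, (1 / s) * α k ^ 2 = (1 - α k) * γ k + μ * α k) ∧
    (∀ k, γ (k + 1) = (1 - α k) * γ k + μ * α k) ∧
    (∀ k, α k * γ k / (γ k + μ * α k) = (α k - μ * s) / (1 - μ * s)) ∧
    (∀ k, α k / γ (k + 1) = s / α k ∧
      s / α k = Real.sqrt s * t (k + 1) / 2 * tanhc (Real.sqrt μ / 2 * t (k + 1))) := by
  obtain ⟨m, hm, rfl⟩ : ∃ m, 0 ≤ m ∧ m ^ 2 = μ := ⟨_, Real.sqrt_nonneg μ, Real.sq_sqrt hμ⟩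
  obtain ⟨r, hr, rfl⟩ : ∃ r, 0 < r ∧ r ^ 2 = s :=
    ⟨_, Real.sqrt_pos.mpr hs, Real.sq_sqrt hs.le⟩
  have hsm : Real.sqrt (m ^ 2) = m := Real.sqrt_sq hm
  have hsr : Real.sqrt (r ^ 2) = r := Real.sqrt_sq hr.le
  simp only [hsm, hsr] at hα hγ hadapt ⊢
  have hxnn : ∀ k, 0 ≤ m / 2 * t k := fun k =>
    mul_nonneg (div_nonneg hm (by norm_num)) (htpos k).le
  have hsinhc : ∀ k, 0 < sinhc (m / 2 * t k) := fun k => sinhc_pos (hxnn k)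
  have hcosh : ∀ k, 0 < Real.cosh (m / 2 * t k) := fun k => Real.cosh_pos _
  have hScosh : ∀ k, Real.cosh (m / 2 * t k) ^ 2
      = (m / 2 * t k) ^ 2 * sinhc (m / 2 * t k) ^ 2 + 1 := by
    intro k
    rw [Real.cosh_sq, sinh_eq_mul]
    ring
  set S : ℕ → ℝ := fun k => t k ^ 2 / 4 * sinhc (m / 2 * t k) ^ 2 with hS
  have hSpos : ∀ k, 0 < S k := fun k => by
    have h1 := hsinhc k; have h2 := htpos k
    simp only [hS]; positivity
  -- γ k = μ + 1 / S k
  have hγS : ∀ k, γ k = m ^ 2 + 1 / S k := by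
    intro k
    have h1 := (hsinhc k).ne'
    have h2 := (htpos k).ne'
    have h3 := (hSpos k).ne'
    simp only [hS]
    rw [hγ k, cothc_eq, div_pow, hScosh k]
    generalize hc : sinhc (m / 2 * t k) = c at h1 ⊢
    field_simp
    ring
  -- α k ^ 2 = s * γ (k+1)
  have hα2 : ∀ k, α k ^ 2 = r ^ 2 * γ (k + 1) := by
    intro k
    have h1 := (hsinhc (k + 1)).ne'
    have h2 := (htpos (k + 1)).ne'
    rw [hα k, hγ (k + 1), cothc_eq]
    field_simp
    ring
  have hαpos : ∀ k, 0 < α k := by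
    intro k
    rw [hα k, cothc_eq]
    have := hsinhc (k + 1); have := hcosh (k + 1); have := htpos (k + 1)
    positivity
  have hγpos : ∀ k, 0 < γ k := fun k => by
    rw [hγS k]
    have h := hSpos k
    have := one_div_pos.mpr h
    positivity
  have h1α : ∀ k, 0 < 1 - α k := by
    intro k
    have had : (1 - α k) * S (k + 1) = S k := hadapt k
    nlinarith [hSpos k, hSpos (k + 1)]
  -- key recursion
  have hkey : ∀ k, (1 - α k) * γ k + m ^ 2 * α k = γ (k + 1) := by
    intro k
    have had : (1 - α k) * S (k + 1) = S k := hadapt k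
    rw [hγS k, hγS (k + 1), ← had]
    have h1 := (h1α k).ne'
    have h2 := (hSpos (k + 1)).ne'
    field_simp
    ring
  refine ⟨?_, ?_, ?_, ?_, ?_⟩
  · rw [hγS 0]
    have := one_div_pos.mpr (hSpos 0)
    linarith
  · intro k
    rw [hkey k]
    have h := hα2 k
    field_simp
    linarith
  · intro k
    exact (hkey k).symm
  · intro k
    have h : α k ^ 2 = r ^ 2 * ((1 - α k) * γ k + m ^ 2 * α k) := by
      rw [hkey k]; exact hα2 k
    have hd1 : γ k + m ^ 2 * α k ≠ 0 := by
      have := hγpos k; have := hαpos k; positivity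
    have hd2 : (1 : ℝ) - m ^ 2 * r ^ 2 ≠ 0 := by
      intro hc; rw [sub_eq_zero] at hc; linarith
    rw [div_eq_div_iff hd1 hd2]
    linear_combination (-(m ^ 2)) * h
  · intro k
    constructor
    · rw [div_eq_div_iff (hγpos (k + 1)).ne' (hαpos k).ne']
      linear_combination hα2 k
    · rw [hα k, cothc_eq]
      unfold tanhc
      have h1 := (hsinhc (k + 1)).ne'
      have h2 := (htpos (k + 1)).ne'
      have h3 := (hcosh (k + 1)).ne'
      field_simp
end

section
/- Let E be a finite-dimensional real inner product space, p ≥ 2 a real number, C > 0, μ ≥ 0, x₀ ∈ E. Let S : [0,∞) → ℝ be differentiable with S(0) = 0 and S′(t) = (1 + S(t)^p)^{1/p}, and define cosh_p(x) = (1 + S(x)^p)^{1/p}, sinhc_p(x) = S(x)/x for x > 0 with sinhc_p(0) = 1, tanhc_p(x) = sinhc_p(x)/cosh_p(x), cothc_p(x) = 1/tanhc_p(x). Let h : E → ℝ be convex and differentiable, f : E → ℝ differentiable and μ-uniformly convex with respect to h, and x* a minimizer of f. Suppose X, Z : [0,∞) → E are continuous with X(0) = Z(0) = x₀, X is differentiable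 and t ↦ ∇h(Z(t)) is differentiable on (0,∞), and for all t > 0: Ẋ(t) = (p/t)·cothc_p(C^{1/p}·μ^{1/p}·t)·(Z(t) − X(t)) and d/dt[∇h(Z(t))] = C·p·t^{p−1}·tanhc_p(C^{1/p}·μ^{1/p}·t)^{p−1}·(μ·∇h(X(t)) − μ·∇h(Z(t)) − ∇f(X(t))). Then for all t > 0, f(X(t)) − f(x*) ≤ D_h(x*, x₀) / (C·t^p·sinhc_p(C^{1/p}·μ^{1/p}·t)^p). -/
open scoped RealInnerProductSpace

/-- The Bregman divergence `D_h(y, x) = h(y) − h(x) − ⟨∇h(x), y − x⟩`. -/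
noncomputable def breg {E : Type*} [NormedAddCommGroup E] [InnerProductSpace ℝ E]
    [CompleteSpace E] (h : E → ℝ) (y x : E) : ℝ :=
  h y - h x - ⟪gradient h x, y - x⟫

open Filter Set Topology

section auxlemmas
variable {E : Type*} [NormedAddCommGroup E] [InnerProductSpace ℝ E] [CompleteSpace E]

lemma grad_ineq {h : E → ℝ} (hconv : ConvexOn ℝ Set.univ h) (hdiff : Differentiable ℝ h)
    (x y : E) : h x + ⟪gradient h x, y - x⟫ ≤ h y := by
  have hγd : ∀ s : ℝ, HasDerivAt (fun s : ℝ => x + s • (y - x)) (y - x) s := by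
    intro s
    simpa using ((hasDerivAt_id s).smul_const (y - x)).const_add x
  have hgd : ∀ s : ℝ, HasDerivAt (fun s : ℝ => h (x + s • (y - x)))
      ⟪gradient h (x + s • (y - x)), y - x⟫ s := by
    intro s
    have := ((hdiff (x + s • (y - x))).hasGradientAt.hasFDerivAt).comp_hasDerivAt s (hγd s)
    simpa [Function.comp_def] using this
  have hconv' : ConvexOn ℝ Set.univ (fun s : ℝ => h (x + s • (y - x))) := by
    have := hconv.comp_affineMap (AffineMap.lineMap x y)
    have heq : (fun s : ℝ => h (x + s • (y - x))) = h ∘ (AffineMap.lineMap x y) := by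
      funext s
      simp only [Function.comp_apply, AffineMap.lineMap_apply_module']
      rw [add_comm]
    rw [heq]
    simpa using this
  have hs := hconv'.le_slope_of_hasDerivAt (Set.mem_univ (0:ℝ)) (Set.mem_univ (1:ℝ))
    one_pos (hgd 0)
  rw [slope_def_field] at hs
  simp at hs
  have e : ⟪gradient h x, y - x⟫ = fderiv ℝ h x y - fderiv ℝ h x x := by simp
  linarith

lemma breg_nonneg {h : E → ℝ} (hconv : ConvexOn ℝ Set.univ h) (hdiff : Differentiable ℝ h)
    (y x : E) : 0 ≤ breg h y x := by
  have := grad_ineq hconv hdiff x y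
  simp only [breg]; linarith

lemma breg_three (h : E → ℝ) (a z x : E) :
    ⟪gradient h z - gradient h x, a - z⟫ = breg h a x - breg h a z - breg h z x := by
  simp only [breg, inner_sub_left, inner_sub_right]
  ring


lemma breg_comp_hasDerivAt {h : E → ℝ} (hconv : ConvexOn ℝ Set.univ h)
    (hdiff : Differentiable ℝ h) (a : E) {Z : ℝ → E} {G' : E} {t : ℝ}
    (hZ : ContinuousAt Z t)
    (hG : HasDerivAt (fun τ => gradient h (Z τ)) G' t) :
    HasDerivAt (fun τ => breg h a (Z τ)) (-⟪G', a - Z t⟫) t := by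
  set G : ℝ → E := fun τ => gradient h (Z τ) with hGdef
  have key : ∀ q s : ℝ, -⟪G q - G s, Z q⟫ ≤ (h (Z q) - ⟪G q, Z q⟫) - (h (Z s) - ⟪G s, Z s⟫)
      ∧ (h (Z q) - ⟪G q, Z q⟫) - (h (Z s) - ⟪G s, Z s⟫) ≤ -⟪G q - G s, Z s⟫ := by
    intro q s
    have h1 := grad_ineq hconv hdiff (Z s) (Z q)
    have h2 := grad_ineq hconv hdiff (Z q) (Z s)
    simp only [inner_sub_left, inner_sub_right, ← hGdef] at h1 h2 ⊢
    constructor <;> linarith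
  have hω : HasDerivAt (fun τ => h (Z τ) - ⟪G τ, Z τ⟫) (-⟪G', Z t⟫) t := by
    rw [hasDerivAt_iff_tendsto_slope]
    have hslopeG : Tendsto (slope G t) (𝓝[≠] t) (𝓝 G') := hasDerivAt_iff_tendsto_slope.1 hG
    have hZt : Tendsto Z (𝓝[≠] t) (𝓝 (Z t)) := hZ.tendsto.mono_left nhdsWithin_le_nhds
    have hu : Tendsto (fun q => -⟪slope G t q, Z q⟫) (𝓝[≠] t) (𝓝 (-⟪G', Z t⟫)) :=
      (hslopeG.inner hZt).neg
    have hv : Tendsto (fun q => -⟪slope G t q, Z t⟫) (𝓝[≠] t) (𝓝 (-⟪G', Z t⟫)) :=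
      (hslopeG.inner tendsto_const_nhds).neg
    have hmin := hu.min hv
    have hmax := hu.max hv
    rw [min_self] at hmin
    rw [max_self] at hmax
    have hbound : ∀ q ∈ ({t}ᶜ : Set ℝ),
        min (-⟪slope G t q, Z q⟫) (-⟪slope G t q, Z t⟫)
          ≤ slope (fun τ => h (Z τ) - ⟪G τ, Z τ⟫) t q
        ∧ slope (fun τ => h (Z τ) - ⟪G τ, Z τ⟫) t q
          ≤ max (-⟪slope G t q, Z q⟫) (-⟪slope G t q, Z t⟫) := by
      intro q hq
      simp only [mem_compl_iff, mem_singleton_iff] at hq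
      have hkl := (key q t).1
      have hku := (key q t).2
      have hsm : ∀ b : E, ⟪slope G t q, b⟫ = (q - t)⁻¹ * ⟪G q - G t, b⟫ := by
        intro b
        rw [slope_def_module, real_inner_smul_left]
      rw [slope_def_field]
      rcases lt_or_gt_of_ne hq with hlt | hgt
      · -- q < t, divide by q - t < 0
        have hd : (q - t)⁻¹ < 0 := inv_lt_zero.2 (by linarith)
        constructor
        · refine le_trans (min_le_right _ _) ?_
          rw [hsm, div_eq_inv_mul]
          nlinarith [mul_le_mul_of_nonpos_left hku hd.le]
        · refine le_trans ?_ (le_max_left _ _)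
          rw [hsm, div_eq_inv_mul]
          nlinarith [mul_le_mul_of_nonpos_left hkl hd.le]
      · -- q > t
        have hd : 0 < (q - t)⁻¹ := inv_pos.2 (by linarith)
        constructor
        · refine le_trans (min_le_left _ _) ?_
          rw [hsm, div_eq_inv_mul]
          nlinarith [mul_le_mul_of_nonneg_left hkl hd.le]
        · refine le_trans ?_ (le_max_right _ _)
          rw [hsm, div_eq_inv_mul]
          nlinarith [mul_le_mul_of_nonneg_left hku hd.le]
    refine tendsto_of_tendsto_of_tendsto_of_le_of_le' hmin hmax ?_ ?_
    · filter_upwards [self_mem_nhdsWithin] with q hq using (hbound q hq).1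
    · filter_upwards [self_mem_nhdsWithin] with q hq using (hbound q hq).2
  have hinner : HasDerivAt (fun τ => ⟪G τ, a⟫) (⟪G', a⟫) t := by
    have := HasDerivAt.inner ℝ hG (hasDerivAt_const t a)
    simpa using this
  have hcomb := ((hasDerivAt_const t (h a)).sub hinner).sub hω
  have heq : (fun τ => h a - ⟪G τ, a⟫ - (h (Z τ) - ⟪G τ, Z τ⟫)) = fun τ => breg h a (Z τ) := by
    funext τ
    simp only [breg, inner_sub_right, ← hGdef]
    ring
  replace hcomb : HasDerivAt (fun τ => h a - ⟪G τ, a⟫ - (h (Z τ) - ⟪G τ, Z τ⟫))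
      (0 - ⟪G', a⟫ - -⟪G', Z t⟫) t := hcomb
  rw [heq] at hcomb
  convert hcomb using 1
  simp only [inner_sub_right]
  ring

lemma core_lyapunov {E : Type*} [NormedAddCommGroup E] [InnerProductSpace ℝ E]
    [CompleteSpace E]
    (μ : ℝ) (hμ : 0 ≤ μ) (x₀ : E) (h f : E → ℝ)
    (hhconv : ConvexOn ℝ Set.univ h) (hhdiff : Differentiable ℝ h)
    (hfdiff : Differentiable ℝ f)
    (hunif : ∀ x y : E, μ * breg h x y ≤ breg f x y)
    (xstar : E)
    (X Z : ℝ → E)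
    (hXcont : ContinuousOn X (Set.Ici 0)) (hZcont : ContinuousOn Z (Set.Ici 0))
    (hX0 : X 0 = x₀) (hZ0 : Z 0 = x₀)
    (A a' β γ : ℝ → ℝ)
    (hA0 : Tendsto A (𝓝[>] 0) (𝓝 0))
    (hApos : ∀ t > (0:ℝ), 0 < A t)
    (hA' : ∀ t > (0:ℝ), HasDerivAt A (a' t) t)
    (ha'β : ∀ t > (0:ℝ), a' t = A t * β t)
    (ha'γ : ∀ t > (0:ℝ), a' t = (1 + μ * A t) * γ t)
    (ha'nn : ∀ t > (0:ℝ), 0 ≤ a' t)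
    (hflow1 : ∀ t > (0:ℝ), HasDerivAt X (β t • (Z t - X t)) t)
    (hflow2 : ∀ t > (0:ℝ), HasDerivAt (fun τ => gradient h (Z τ))
      (γ t • (μ • gradient h (X t) - μ • gradient h (Z t) - gradient f (X t))) t) :
    ∀ t > (0:ℝ), A t * (f (X t) - f xstar) ≤ breg h xstar x₀ := by
  intro t ht
  set EE : ℝ → ℝ := fun τ =>
    A τ * (f (X τ) - f xstar) + (1 + μ * A τ) * breg h xstar (Z τ) with hEEdef
  -- derivative of EE at τ > 0, and nonpositivity
  have hEderiv : ∀ τ > (0:ℝ), ∃ e : ℝ, HasDerivAt EE e τ ∧ e ≤ 0 := by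
    intro τ hτ
    have hXc : ContinuousAt Z τ :=
      (hZcont.continuousAt (Ici_mem_nhds hτ))
    -- derivative of f(X ·)
    have hF : HasDerivAt (fun σ => f (X σ) - f xstar)
        (β τ * ⟪gradient f (X τ), Z τ - X τ⟫) τ := by
      have hcomp := ((hfdiff (X τ)).hasGradientAt.hasFDerivAt).comp_hasDerivAt τ (hflow1 τ hτ)
      have : HasDerivAt (fun σ => f (X σ))
          (β τ * ⟪gradient f (X τ), Z τ - X τ⟫) τ := by
        have e : β τ * ⟪gradient f (X τ), Z τ - X τ⟫
            = ((InnerProductSpace.toDual ℝ E) (gradient f (X τ))) (β τ • (Z τ - X τ)) := by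
          simp [real_inner_smul_right]
        rw [e]
        exact hcomp
      exact this.sub_const _
    -- derivative of breg h xstar (Z ·)
    have hD : HasDerivAt (fun σ => breg h xstar (Z σ))
        (-⟪γ τ • (μ • gradient h (X τ) - μ • gradient h (Z τ) - gradient f (X τ)),
          xstar - Z τ⟫) τ :=
      breg_comp_hasDerivAt hhconv hhdiff xstar hXc (hflow2 τ hτ)
    have hE : HasDerivAt EE
        (a' τ * (f (X τ) - f xstar) + A τ * (β τ * ⟪gradient f (X τ), Z τ - X τ⟫)
          + ((μ * a' τ) * breg h xstar (Z τ) + (1 + μ * A τ) *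
            (-⟪γ τ • (μ • gradient h (X τ) - μ • gradient h (Z τ) - gradient f (X τ)),
              xstar - Z τ⟫))) τ := by
      have h1 := (hA' τ hτ).mul hF
      have h2 := (((hA' τ hτ).const_mul μ).const_add 1).mul hD
      exact h1.add h2
    refine ⟨_, hE, ?_⟩
    -- now show the derivative value is ≤ 0
    set F := f (X τ) - f xstar with hFdef
    set v₁ := ⟪gradient f (X τ), Z τ - X τ⟫ with hv₁
    set D := breg h xstar (Z τ) with hDdef
    have hinner1 : -⟪γ τ • (μ • gradient h (X τ) - μ • gradient h (Z τ) - gradient f (X τ)),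
        xstar - Z τ⟫ = γ τ * (μ * (breg h xstar (X τ) - breg h xstar (Z τ) - breg h (Z τ) (X τ))
          + ⟪gradient f (X τ), xstar - Z τ⟫) := by
      rw [real_inner_smul_left]
      have h3 := breg_three h xstar (Z τ) (X τ)
      simp only [inner_sub_left, real_inner_smul_left] at h3 ⊢
      linear_combination (γ τ * μ) * h3
    rw [hinner1]
    have hβτ := ha'β τ hτ
    have hγτ := ha'γ τ hτ
    have hAv : A τ * (β τ * v₁) = a' τ * v₁ := by rw [← mul_assoc, ← hβτ]
    have hQ : (1 + μ * A τ) *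
        (γ τ * (μ * (breg h xstar (X τ) - breg h xstar (Z τ) - breg h (Z τ) (X τ))
          + ⟪gradient f (X τ), xstar - Z τ⟫))
        = a' τ * (μ * (breg h xstar (X τ) - breg h xstar (Z τ) - breg h (Z τ) (X τ))
          + ⟪gradient f (X τ), xstar - Z τ⟫) := by
      rw [← mul_assoc, ← hγτ]
    rw [hAv, hQ]
    have hi2 : v₁ + ⟪gradient f (X τ), xstar - Z τ⟫ = ⟪gradient f (X τ), xstar - X τ⟫ := by
      rw [hv₁, ← inner_add_right]
      congr 1
      abel
    have hu := hunif xstar (X τ)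
    have hbregf : breg f xstar (X τ)
        = f xstar - f (X τ) - ⟪gradient f (X τ), xstar - X τ⟫ := rfl
    rw [hbregf] at hu
    have hB3 : 0 ≤ breg h (Z τ) (X τ) := breg_nonneg hhconv hhdiff _ _
    have hμB3 : 0 ≤ μ * breg h (Z τ) (X τ) := mul_nonneg hμ hB3
    have hbr : F + v₁ + (μ * (breg h xstar (X τ) - breg h xstar (Z τ) - breg h (Z τ) (X τ))
        + ⟪gradient f (X τ), xstar - Z τ⟫) + μ * D ≤ 0 := by
      have : F + (v₁ + ⟪gradient f (X τ), xstar - Z τ⟫)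
          + μ * breg h xstar (X τ) - μ * breg h (Z τ) (X τ)
          + μ * (D - breg h xstar (Z τ)) ≤ 0 := by
        rw [hi2]
        have hDD : D - breg h xstar (Z τ) = 0 := by rw [hDdef]; ring
        rw [hDD]
        simp only [hFdef]
        linarith
      linarith
    have hfac : a' τ * F + a' τ * v₁ + (μ * a' τ * D
        + a' τ * (μ * (breg h xstar (X τ) - breg h xstar (Z τ) - breg h (Z τ) (X τ))
          + ⟪gradient f (X τ), xstar - Z τ⟫))
        = a' τ * (F + v₁ + (μ * (breg h xstar (X τ) - breg h xstar (Z τ) - breg h (Z τ) (X τ))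
          + ⟪gradient f (X τ), xstar - Z τ⟫) + μ * D) := by ring
    rw [hfac]
    exact mul_nonpos_of_nonneg_of_nonpos (ha'nn τ hτ) hbr
  -- monotonicity of EE on [s, t]
  have hmono : ∀ s ∈ Ioc (0:ℝ) t, EE t ≤ EE s := by
    intro s hs
    have anti : AntitoneOn EE (Icc s t) := by
      apply antitoneOn_of_deriv_nonpos (convex_Icc s t)
      · intro τ hτ
        obtain ⟨e, he, _⟩ := hEderiv τ (lt_of_lt_of_le hs.1 hτ.1)
        exact he.continuousAt.continuousWithinAt
      · intro τ hτ
        rw [interior_Icc] at hτ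
        obtain ⟨e, he, _⟩ := hEderiv τ (lt_trans hs.1 hτ.1)
        exact he.differentiableAt.differentiableWithinAt
      · intro τ hτ
        rw [interior_Icc] at hτ
        obtain ⟨e, he, hle⟩ := hEderiv τ (lt_trans hs.1 hτ.1)
        rw [he.deriv]
        exact hle
    exact anti ⟨le_refl s, hs.2⟩ ⟨hs.2, le_refl t⟩ hs.2
  -- the limit s → 0⁺ step
  have hfinal : ∀ δ > (0:ℝ), A t * (f (X t) - f xstar) ≤ breg h xstar x₀ + 3 * δ := by
    intro δ hδ
    set D0 := breg h xstar x₀ with hD0def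
    -- derivative of the difference quotient at 0
    have hw : HasDerivAt (fun ε : ℝ => h (x₀ + ε • (x₀ - xstar)))
        ⟪gradient h x₀, x₀ - xstar⟫ 0 := by
      have hγd : HasDerivAt (fun ε : ℝ => x₀ + ε • (x₀ - xstar)) (x₀ - xstar) 0 := by
        simpa using ((hasDerivAt_id (0:ℝ)).smul_const (x₀ - xstar)).const_add x₀
      have := ((hhdiff (x₀ + (0:ℝ) • (x₀ - xstar))).hasGradientAt.hasFDerivAt).comp_hasDerivAt
        (0:ℝ) hγd
      simpa [Function.comp_def] using this
    have hslope : Tendsto (fun ε => (h (x₀ + ε • (x₀ - xstar)) - h x₀) / ε) (𝓝[>] (0:ℝ))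
        (𝓝 ⟪gradient h x₀, x₀ - xstar⟫) := by
      have h1 := hasDerivAt_iff_tendsto_slope.1 hw
      have h2 : Tendsto (slope (fun ε : ℝ => h (x₀ + ε • (x₀ - xstar))) 0) (𝓝[>] (0:ℝ))
          (𝓝 ⟪gradient h x₀, x₀ - xstar⟫) :=
        h1.mono_left (nhdsWithin_mono _ (fun q hq => ne_of_gt hq))
      refine h2.congr fun q => ?_
      rw [slope_def_field]
      simp
    have hR : Tendsto (fun ε => h xstar - h x₀ + (h (x₀ + ε • (x₀ - xstar)) - h x₀) / ε)
        (𝓝[>] (0:ℝ)) (𝓝 D0) := by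
      have h3 : D0 = h xstar - h x₀ + ⟪gradient h x₀, x₀ - xstar⟫ := by
        have : (⟪gradient h x₀, x₀ - xstar⟫ : ℝ) = -⟪gradient h x₀, xstar - x₀⟫ := by
          rw [← inner_neg_right]
          congr 1
          abel
        rw [hD0def]
        simp only [breg, this]
        ring
      rw [h3]
      exact (tendsto_const_nhds).add hslope
    obtain ⟨ε, hεR, hεpos⟩ :=
      ((hR.eventually_lt_const (by linarith : D0 < D0 + δ)).and self_mem_nhdsWithin).exists
    -- bound breg h xstar (Z s) by the ε-difference quotient
    have hQbound : ∀ s ∈ Ici (0:ℝ), breg h xstar (Z s) ≤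
        h xstar - h (Z s) + (h (Z s + ε • (Z s - xstar)) - h (Z s)) / ε := by
      intro s _
      have hg := grad_ineq hhconv hhdiff (Z s) (Z s + ε • (Z s - xstar))
      have hsimp : (⟪gradient h (Z s), Z s + ε • (Z s - xstar) - Z s⟫ : ℝ)
          = ε * ⟪gradient h (Z s), Z s - xstar⟫ := by
        rw [add_sub_cancel_left, real_inner_smul_right]
      rw [hsimp] at hg
      have hflip : (⟪gradient h (Z s), Z s - xstar⟫ : ℝ)
          = -⟪gradient h (Z s), xstar - Z s⟫ := by
        rw [← inner_neg_right]
        congr 1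
        abel
      rw [hflip] at hg
      have hdiv : -⟪gradient h (Z s), xstar - Z s⟫
          ≤ (h (Z s + ε • (Z s - xstar)) - h (Z s)) / ε := by
        rw [le_div_iff₀ hεpos]
        nlinarith
      simp only [breg]
      linarith
    -- continuity of the bound as s → 0⁺
    have hZ0' : Tendsto Z (𝓝[>] (0:ℝ)) (𝓝 x₀) := by
      have := (hZcont 0 (self_mem_Ici)).tendsto
      rw [hZ0] at this
      exact this.mono_left (nhdsWithin_mono _ Ioi_subset_Ici_self)
    have hcont := hhdiff.continuous
    have hQtend : Tendsto (fun s => h xstar - h (Z s)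
        + (h (Z s + ε • (Z s - xstar)) - h (Z s)) / ε) (𝓝[>] (0:ℝ))
        (𝓝 (h xstar - h x₀ + (h (x₀ + ε • (x₀ - xstar)) - h x₀) / ε)) := by
      have hZ1 : Tendsto (fun s => h (Z s)) (𝓝[>] (0:ℝ)) (𝓝 (h x₀)) :=
        (hcont.tendsto x₀).comp hZ0'
      have hZ2 : Tendsto (fun s => h (Z s + ε • (Z s - xstar))) (𝓝[>] (0:ℝ))
          (𝓝 (h (x₀ + ε • (x₀ - xstar)))) := by
        refine (hcont.tendsto _).comp ?_
        exact hZ0'.add ((hZ0'.sub_const xstar).const_smul ε)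
      exact (tendsto_const_nhds.sub hZ1).add ((hZ2.sub hZ1).div_const ε)
    have hDs : ∀ᶠ s in 𝓝[>] (0:ℝ), breg h xstar (Z s) ≤ D0 + δ := by
      filter_upwards [hQtend.eventually_lt_const hεR, self_mem_nhdsWithin] with s h1 h2
      exact le_trans (hQbound s (mem_Ici.2 (le_of_lt h2))) (le_of_lt h1)
    -- A s * F s → 0
    have hXf : Tendsto (fun s => f (X s) - f xstar) (𝓝[>] (0:ℝ)) (𝓝 (f x₀ - f xstar)) := by
      have := (hXcont 0 (self_mem_Ici)).tendsto
      rw [hX0] at this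
      have h4 : Tendsto (fun s => f (X s)) (𝓝[>] (0:ℝ)) (𝓝 (f x₀)) :=
        (hfdiff.continuous.tendsto x₀).comp (this.mono_left (nhdsWithin_mono _ Ioi_subset_Ici_self))
      exact h4.sub_const _
    have hAF : Tendsto (fun s => A s * (f (X s) - f xstar)) (𝓝[>] (0:ℝ)) (𝓝 0) := by
      simpa using hA0.mul hXf
    have hμAD : Tendsto (fun s => μ * A s * (D0 + δ)) (𝓝[>] (0:ℝ)) (𝓝 0) := by
      have := (hA0.const_mul μ).mul_const (D0 + δ)
      simpa using this
    have hev : ∀ᶠ s in 𝓝[>] (0:ℝ), (A s * (f (X s) - f xstar) < δ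
        ∧ μ * A s * (D0 + δ) < δ) ∧ (breg h xstar (Z s) ≤ D0 + δ ∧ s ∈ Ioo (0:ℝ) t) :=
      ((hAF.eventually_lt_const hδ).and (hμAD.eventually_lt_const hδ)).and
        (hDs.and (eventually_of_mem (Ioo_mem_nhdsGT ht) fun x hx => hx))
    obtain ⟨s, ⟨hs1, hs2⟩, hs3, hs4⟩ := hev.exists
    -- chain the inequalities
    have hEEt : A t * (f (X t) - f xstar) ≤ EE t := by
      have hD0' : 0 ≤ breg h xstar (Z t) := breg_nonneg hhconv hhdiff _ _
      have h1μ : 0 ≤ 1 + μ * A t := by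
        have := mul_nonneg hμ (hApos t ht).le
        linarith
      have := mul_nonneg h1μ hD0'
      simp only [hEEdef]
      linarith
    have hsmem : s ∈ Ioc (0:ℝ) t := ⟨hs4.1, hs4.2.le⟩
    have hEs := hmono s hsmem
    have h1μs : 0 ≤ 1 + μ * A s := by
      have := mul_nonneg hμ (hApos s hs4.1).le
      linarith
    have hEEs : EE s ≤ δ + (D0 + δ) + μ * A s * (D0 + δ) := by
      have hb : (1 + μ * A s) * breg h xstar (Z s) ≤ (1 + μ * A s) * (D0 + δ) :=
        mul_le_mul_of_nonneg_left hs3 h1μs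
      simp only [hEEdef]
      nlinarith
    have hμADs : μ * A s * (D0 + δ) < δ := hs2
    linarith
  have := hfinal
  rcases le_or_gt (A t * (f (X t) - f xstar)) (breg h xstar x₀) with hle | hlt
  · exact hle
  · exfalso
    have hδ : (0:ℝ) < (A t * (f (X t) - f xstar) - breg h xstar x₀) / 6 := by linarith
    have := hfinal _ hδ
    linarith

end auxlemmas

lemma rpow_onediv_nonneg {p : ℝ} (hp : 2 ≤ p) (z : ℝ) : 0 ≤ z ^ (1/p) := by
  have hp0 : 0 < p := by linarith
  rcases le_or_gt 0 z with hz | hz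
  · exact Real.rpow_nonneg hz _
  · rw [Real.rpow_def_of_neg hz]
    apply mul_nonneg (Real.exp_nonneg _)
    apply Real.cos_nonneg_of_mem_Icc
    constructor
    · have := Real.pi_pos
      have h1 : 0 ≤ 1/p * Real.pi := by positivity
      linarith
    · have h2 : 1/p ≤ 1/2 := by
        rw [div_le_div_iff₀ hp0 (by norm_num)]
        linarith
      have := Real.pi_pos
      calc 1/p * Real.pi ≤ 1/2 * Real.pi := by nlinarith
        _ = Real.pi / 2 := by ring


/-- Convergence rate of the unified accelerated tensor flow: for all `t > 0`,
`f(X(t)) − f(x*) ≤ D_h(x*, x₀) / (C·t^p·sinhc_p(C^{1/p}μ^{1/p}t)^p)`. -/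
theorem unified_accelerated_tensor_flow_convergence
    {E : Type*} [NormedAddCommGroup E] [InnerProductSpace ℝ E] [FiniteDimensional ℝ E]
    (p : ℝ) (hp : 2 ≤ p) (C μ : ℝ) (hC : 0 < C) (hμ : 0 ≤ μ) (x₀ : E)
    (S : ℝ → ℝ) (hS0 : S 0 = 0)
    (hS : ∀ t ∈ Set.Ici (0 : ℝ),
      HasDerivWithinAt S ((1 + S t ^ p) ^ (1 / p)) (Set.Ici 0) t)
    (coshp sinhcp tanhcp cothcp : ℝ → ℝ)
    (hcoshp : ∀ x, coshp x = (1 + S x ^ p) ^ (1 / p))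
    (hsinhcp : ∀ x, sinhcp x = if x = 0 then 1 else S x / x)
    (htanhcp : ∀ x, tanhcp x = sinhcp x / coshp x)
    (hcothcp : ∀ x, cothcp x = 1 / tanhcp x)
    (h f : E → ℝ)
    (hhconv : ConvexOn ℝ Set.univ h) (hhdiff : Differentiable ℝ h)
    (hfdiff : Differentiable ℝ f)
    (hunif : ∀ x y : E, μ * breg h x y ≤ breg f x y)
    (xstar : E) (hmin : ∀ x, f xstar ≤ f x)
    (X Z : ℝ → E)
    (hXcont : ContinuousOn X (Set.Ici 0)) (hZcont : ContinuousOn Z (Set.Ici 0))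
    (hX0 : X 0 = x₀) (hZ0 : Z 0 = x₀)
    (hflow1 : ∀ t > (0 : ℝ), HasDerivAt X
      ((p / t * cothcp (C ^ (1 / p) * μ ^ (1 / p) * t)) • (Z t - X t)) t)
    (hflow2 : ∀ t > (0 : ℝ), HasDerivAt (fun τ => gradient h (Z τ))
      ((C * p * t ^ (p - 1) * tanhcp (C ^ (1 / p) * μ ^ (1 / p) * t) ^ (p - 1)) •
        (μ • gradient h (X t) - μ • gradient h (Z t) - gradient f (X t))) t) :
    ∀ t > (0 : ℝ), f (X t) - f xstar ≤
      breg h xstar x₀ / (C * t ^ p * sinhcp (C ^ (1 / p) * μ ^ (1 / p) * t) ^ p) := by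
  have hp0 : (0:ℝ) < p := by linarith
  have hpne : p ≠ 0 := ne_of_gt hp0
  set lam : ℝ := C ^ (1/p) * μ ^ (1/p) with hlam
  set A : ℝ → ℝ := fun τ => C * τ ^ p * sinhcp (lam * τ) ^ p with hA
  set β : ℝ → ℝ := fun τ => p / τ * cothcp (lam * τ) with hβ
  set γ : ℝ → ℝ := fun τ => C * p * τ ^ (p-1) * tanhcp (lam * τ) ^ (p-1) with hγ
  -- S facts (used in the μ > 0 case)
  have hScont : ContinuousOn S (Set.Ici 0) := fun x hx => (hS x hx).continuousWithinAt
  have hSdiff' : ∀ x ∈ Ioi (0:ℝ), HasDerivAt S ((1 + S x ^ p) ^ (1/p)) x := fun x hx =>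
    (hS x (mem_Ici.2 (le_of_lt hx))).hasDerivAt (Ici_mem_nhds hx)
  have hSmono : MonotoneOn S (Set.Ici 0) := by
    apply monotoneOn_of_deriv_nonneg (convex_Ici 0) hScont
    · rw [interior_Ici]
      exact fun x hx => (hSdiff' x hx).differentiableAt.differentiableWithinAt
    · rw [interior_Ici]
      intro x hx
      rw [(hSdiff' x hx).deriv]
      exact rpow_onediv_nonneg hp _
  have hSnn : ∀ x ∈ Set.Ici (0:ℝ), 0 ≤ S x := by
    intro x hx
    have := hSmono self_mem_Ici hx hx
    rwa [hS0] at this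
  have hSone : ∀ x ∈ Set.Ici (0:ℝ), 1 ≤ (1 + S x ^ p) ^ (1/p) := by
    intro x hx
    have h1 : (1:ℝ) ≤ 1 + S x ^ p := by
      have := Real.rpow_nonneg (hSnn x hx) p
      linarith
    calc (1:ℝ) = 1 ^ (1/p) := (Real.one_rpow _).symm
      _ ≤ (1 + S x ^ p) ^ (1/p) := Real.rpow_le_rpow zero_le_one h1 (by positivity)
  have hSge : ∀ x ∈ Set.Ici (0:ℝ), x ≤ S x := by
    have hgm : MonotoneOn (fun x => S x - x) (Set.Ici 0) := by
      apply monotoneOn_of_deriv_nonneg (convex_Ici 0) (hScont.sub continuousOn_id)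
      · rw [interior_Ici]
        exact fun x hx =>
          ((hSdiff' x hx).sub (hasDerivAt_id x)).differentiableAt.differentiableWithinAt
      · rw [interior_Ici]
        intro x hx
        rw [((hSdiff' x hx).sub (hasDerivAt_id x)).deriv]
        have := hSone x (mem_Ici.2 (le_of_lt hx))
        linarith
    intro x hx
    have := hgm self_mem_Ici hx hx
    simp only [hS0] at this
    linarith
  have hSpos : ∀ x > (0:ℝ), 0 < S x := fun x hx => lt_of_lt_of_le hx (hSge x hx.le)
  -- the A facts, by cases on μ
  have hfacts : ∃ a' : ℝ → ℝ, Filter.Tendsto A (𝓝[>] 0) (𝓝 0) ∧ (∀ τ > (0:ℝ), 0 < A τ)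
      ∧ (∀ τ > (0:ℝ), HasDerivAt A (a' τ) τ) ∧ (∀ τ > (0:ℝ), a' τ = A τ * β τ)
      ∧ (∀ τ > (0:ℝ), a' τ = (1 + μ * A τ) * γ τ) ∧ (∀ τ > (0:ℝ), 0 ≤ a' τ) := by
    rcases hμ.eq_or_lt with hμ0 | hμpos
    · -- μ = 0
      have hμrp : ((0:ℝ)) ^ (1/p) = 0 := Real.zero_rpow (one_div_ne_zero hpne)
      have hlam0 : lam = 0 := by rw [hlam, ← hμ0, hμrp, mul_zero]
      have hsinh0 : sinhcp 0 = 1 := by rw [hsinhcp]; simp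
      have hcosh0 : coshp 0 = 1 := by
        rw [hcoshp, hS0, Real.zero_rpow hpne, add_zero, Real.one_rpow]
      have htanh0 : tanhcp 0 = 1 := by rw [htanhcp, hsinh0, hcosh0]; norm_num
      have hcoth0 : cothcp 0 = 1 := by rw [hcothcp, htanh0]; norm_num
      have hAeq : ∀ τ : ℝ, A τ = C * τ ^ p := by
        intro τ
        rw [hA]
        simp only [hlam0, zero_mul, hsinh0, Real.one_rpow, mul_one]
      refine ⟨fun τ => C * (p * τ ^ (p-1)), ?_, ?_, ?_, ?_, ?_, ?_⟩
      · have h1 : Filter.Tendsto (fun τ : ℝ => C * τ ^ p) (𝓝[>] 0) (𝓝 0) := by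
          have h2 := (Real.continuousAt_rpow_const 0 p (Or.inr hp0.le)).tendsto
          rw [Real.zero_rpow hpne] at h2
          have h3 : Filter.Tendsto (fun τ : ℝ => C * τ ^ p) (𝓝 0) (𝓝 (C * 0)) :=
            h2.const_mul C
          rw [mul_zero] at h3
          exact h3.mono_left nhdsWithin_le_nhds
        exact h1.congr (fun τ => (hAeq τ).symm)
      · intro τ hτ
        rw [hAeq]
        positivity
      · intro τ hτ
        have : A = fun τ => C * τ ^ p := funext hAeq
        rw [this]
        exact (Real.hasDerivAt_rpow_const (Or.inl (ne_of_gt hτ))).const_mul C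
      · intro τ hτ
        rw [hAeq, hβ]
        simp only [hlam0, zero_mul, hcoth0, mul_one]
        rw [show p - 1 = p - 1 from rfl, Real.rpow_sub hτ, Real.rpow_one]
        field_simp
      · intro τ hτ
        rw [hγ]
        simp only [hlam0, zero_mul, htanh0, Real.one_rpow, ← hμ0, mul_one, zero_mul, add_zero]
        ring
      · intro τ hτ
        have : (0:ℝ) ≤ τ ^ (p-1) := Real.rpow_nonneg hτ.le _
        positivity
    · -- μ > 0
      have hlampos : 0 < lam := mul_pos (Real.rpow_pos_of_pos hC _) (Real.rpow_pos_of_pos hμpos _)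
      have hlamp : lam ^ p = C * μ := by
        rw [hlam, Real.mul_rpow (Real.rpow_nonneg hC.le _) (Real.rpow_nonneg hμpos.le _),
          ← Real.rpow_mul hC.le, ← Real.rpow_mul hμpos.le, one_div_mul_cancel hpne,
          Real.rpow_one, Real.rpow_one]
      have hAeqμ : ∀ τ > (0:ℝ), A τ = S (lam * τ) ^ p / μ := by
        intro τ hτ
        have hx : 0 < lam * τ := mul_pos hlampos hτ
        have hsx : 0 ≤ S (lam * τ) := hSnn _ hx.le
        rw [hA]
        simp only
        rw [hsinhcp, if_neg hx.ne', Real.div_rpow hsx hx.le,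
          Real.mul_rpow hlampos.le hτ.le, hlamp]
        have hτp : (0:ℝ) < τ ^ p := Real.rpow_pos_of_pos hτ _
        field_simp
      refine ⟨fun τ => p * lam * S (lam * τ) ^ (p-1) * (1 + S (lam * τ) ^ p) ^ (1/p) / μ,
        ?_, ?_, ?_, ?_, ?_, ?_⟩
      · -- tendsto 0
        have hlamt : Filter.Tendsto (fun τ : ℝ => lam * τ) (𝓝[>] 0) (𝓝[Set.Ici 0] 0) := by
          rw [tendsto_nhdsWithin_iff]
          constructor
          · have h7 : Continuous (fun τ : ℝ => lam * τ) := continuous_const.mul continuous_id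
            have h8 := h7.tendsto (0:ℝ)
            rw [mul_zero] at h8
            exact h8.mono_left nhdsWithin_le_nhds
          · filter_upwards [self_mem_nhdsWithin] with τ hτ
            exact (mul_pos hlampos hτ).le
        have hSt : Filter.Tendsto (fun τ => S (lam * τ)) (𝓝[>] 0) (𝓝 0) := by
          have h5 := (hScont 0 self_mem_Ici).tendsto
          rw [hS0] at h5
          exact h5.comp hlamt
        have hpow := (Real.continuousAt_rpow_const 0 p (Or.inr hp0.le)).tendsto
        rw [Real.zero_rpow hpne] at hpow
        have h6 : Filter.Tendsto (fun τ => S (lam * τ) ^ p / μ) (𝓝[>] 0) (𝓝 0) := by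
          have := (hpow.comp hSt).div_const μ
          simpa using this
        refine h6.congr' ?_
        filter_upwards [self_mem_nhdsWithin] with τ hτ
        exact (hAeqμ τ hτ).symm
      · intro τ hτ
        rw [hAeqμ τ hτ]
        have := hSpos (lam * τ) (mul_pos hlampos hτ)
        have := Real.rpow_pos_of_pos this p
        positivity
      · -- derivative
        intro τ hτ
        have hx : 0 < lam * τ := mul_pos hlampos hτ
        have h1 : HasDerivAt (fun τ : ℝ => lam * τ) lam τ := by
          simpa using (hasDerivAt_id τ).const_mul lam
        have h2 : HasDerivAt S ((1 + S (lam * τ) ^ p) ^ (1/p)) (lam * τ) := hSdiff' _ hx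
        have h3 : HasDerivAt (fun τ => S (lam * τ)) ((1 + S (lam * τ) ^ p) ^ (1/p) * lam) τ :=
          h2.comp τ h1
        have h4 : HasDerivAt (fun y : ℝ => y ^ p) (p * S (lam * τ) ^ (p-1)) (S (lam * τ)) :=
          Real.hasDerivAt_rpow_const (Or.inr (by linarith))
        have h5 := (h4.comp τ h3).div_const μ
        have h6 : A =ᶠ[𝓝 τ] fun σ => S (lam * σ) ^ p / μ := by
          filter_upwards [Ioi_mem_nhds hτ] with σ hσ
          exact hAeqμ σ hσ
        refine (h5.congr_of_eventuallyEq h6).congr_deriv ?_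
        ring
      · -- a' = A β
        intro τ hτ
        have hx : 0 < lam * τ := mul_pos hlampos hτ
        have hs : 0 < S (lam * τ) := hSpos _ hx
        have hc : 0 < (1 + S (lam * τ) ^ p) ^ (1/p) := by
          have := Real.rpow_nonneg hs.le p
          positivity
        have hcoth : cothcp (lam * τ) = (1 + S (lam * τ) ^ p) ^ (1/p) * (lam * τ) / S (lam * τ) := by
          rw [hcothcp, htanhcp, hsinhcp, if_neg hx.ne', hcoshp]
          field_simp
        have hsp : S (lam * τ) ^ p = S (lam * τ) ^ (p-1) * S (lam * τ) := by
          rw [← Real.rpow_add_one hs.ne' (p-1), sub_add_cancel]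
        rw [hAeqμ τ hτ, hβ]
        simp only
        rw [hcoth, hsp]
        field_simp
      · -- a' = (1 + μ A) γ
        intro τ hτ
        have hx : 0 < lam * τ := mul_pos hlampos hτ
        have hs : 0 < S (lam * τ) := hSpos _ hx
        have h1s : (0:ℝ) < 1 + S (lam * τ) ^ p := by
          have := Real.rpow_nonneg hs.le p
          linarith
        have hc : 0 < (1 + S (lam * τ) ^ p) ^ (1/p) := Real.rpow_pos_of_pos h1s _
        have htanh : tanhcp (lam * τ)
            = S (lam * τ) / ((lam * τ) * (1 + S (lam * τ) ^ p) ^ (1/p)) := by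
          rw [htanhcp, hsinhcp, if_neg hx.ne', hcoshp]
          field_simp
        have hcp : ((1 + S (lam * τ) ^ p) ^ (1/p)) ^ p = 1 + S (lam * τ) ^ p := by
          rw [← Real.rpow_mul h1s.le, one_div_mul_cancel hpne, Real.rpow_one]
        have hcp1 : ((1 + S (lam * τ) ^ p) ^ (1/p)) ^ p
            = ((1 + S (lam * τ) ^ p) ^ (1/p)) ^ (p-1) * (1 + S (lam * τ) ^ p) ^ (1/p) := by
          rw [← Real.rpow_add_one hc.ne' (p-1), sub_add_cancel]
        have htpow : tanhcp (lam * τ) ^ (p-1) = S (lam * τ) ^ (p-1)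
            / ((lam * τ) ^ (p-1) * (((1 + S (lam * τ) ^ p) ^ (1/p)) ^ (p-1))) := by
          rw [htanh, Real.div_rpow hs.le (by positivity),
            Real.mul_rpow hx.le hc.le]
        have hxp1 : (lam * τ) ^ (p-1) = lam ^ (p-1) * τ ^ (p-1) :=
          Real.mul_rpow hlampos.le hτ.le
        have hlam2 : lam ^ (p-1) = C * μ / lam := by
          rw [eq_div_iff hlampos.ne', ← Real.rpow_add_one hlampos.ne' (p-1), sub_add_cancel,
            hlamp]
        rw [hAeqμ τ hτ, hγ]
        simp only
        rw [htpow, hxp1, hlam2]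
        have hμA : 1 + μ * (S (lam * τ) ^ p / μ) = ((1 + S (lam * τ) ^ p) ^ (1/p)) ^ p := by
          rw [hcp]
          field_simp
        rw [hμA, hcp1]
        have hτp1 : (0:ℝ) < τ ^ (p-1) := Real.rpow_pos_of_pos hτ _
        have hcpp1 : (0:ℝ) < ((1 + S (lam * τ) ^ p) ^ (1/p)) ^ (p-1) :=
          Real.rpow_pos_of_pos hc _
        field_simp
      · intro τ hτ
        have hx : 0 < lam * τ := mul_pos hlampos hτ
        have hs : 0 < S (lam * τ) := hSpos _ hx
        have hsp1 : (0:ℝ) ≤ S (lam * τ) ^ (p-1) := Real.rpow_nonneg hs.le _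
        have hc : (0:ℝ) ≤ (1 + S (lam * τ) ^ p) ^ (1/p) := by
          have := Real.rpow_nonneg hs.le p
          positivity
        apply div_nonneg _ hμpos.le
        apply mul_nonneg (mul_nonneg (mul_nonneg hp0.le hlampos.le) hsp1) hc
  obtain ⟨a', hA0, hApos, hA', ha'β, ha'γ, ha'nn⟩ := hfacts
  have hcore := core_lyapunov μ hμ x₀ h f hhconv hhdiff hfdiff hunif xstar X Z hXcont hZcont
    hX0 hZ0 A a' β γ hA0 hApos hA' ha'β ha'γ ha'nn hflow1 hflow2
  intro t ht
  have := hcore t ht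
  rw [le_div_iff₀ (hApos t ht)]
  calc (f (X t) - f xstar) * A t = A t * (f (X t) - f xstar) := by ring
    _ ≤ breg h xstar x₀ := this
end
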